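/- Let C₄ ⊆ (ℤ/4ℤ)⁶ be the ℤ/4ℤ-linear code generated by the rows of G = [[1,0,0,0,1,1],[0,1,0,1,0,2],[0,0,1,1,2,0]], and let Λ = (1/2)·{x ∈ ℤ⁶ : (x mod 4) ∈ C₄} be its Construction A lattice. Then there exists τ > 0 such that Θ_Λ(iτ) > Θ_{ℤ⁶}(iτ), i.e., the theta series ratio Δ_Λ(τ) exceeds 1 for some τ > 0. -/
import Mathlib

open Real

/-- Majorant on ℤ: `(1/20)^|n|`. -/
noncomputable def uMaj (n : ℤ) : ℝ := (1/20 : ℝ) ^ n.natAbs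

lemma hasSum_uMaj : HasSum uMaj (21/19) := by
  have h1 : HasSum (fun n : ℕ => (1/20 : ℝ) ^ n) (20/19) := by
    have := hasSum_geometric_of_lt_one (by norm_num : (0:ℝ) ≤ 1/20) (by norm_num)
    convert this using 1; norm_num
  have h2 : HasSum (fun n : ℕ => (1/20 : ℝ) ^ (n+1)) (1/19) := by
    have h := h1.mul_left (1/20 : ℝ)
    have he : (fun n : ℕ => (1/20 : ℝ) ^ (n+1)) = fun n : ℕ => 1/20 * (1/20)^n := by
      funext n; rw [pow_succ]; ring
    rw [he, show (1/19 : ℝ) = 1/20 * (20/19) by norm_num]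
    exact h
  have h := h1.int_rec h2
  have heq : uMaj = fun n : ℤ => Int.rec (fun n : ℕ => (1/20:ℝ)^n) (fun n : ℕ => (1/20:ℝ)^(n+1)) n := by
    funext n
    cases n with
    | ofNat m => rfl
    | negSucc m => rfl
  rw [heq]
  convert h using 1; norm_num

lemma exp_neg_pi_le : Real.exp (-π) ≤ 1/20 := by
  rw [exp_neg]
  rw [inv_le_comm₀ (exp_pos _) (by norm_num : (0:ℝ) < 1/20)]
  calc ((1/20:ℝ))⁻¹ = 20 := by norm_num
    _ ≤ exp 3 := by
        have h3 : (exp 1)^(3:ℕ) = exp 3 := by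
          rw [← Real.exp_nat_mul]; norm_num
        have : (2.7182818283:ℝ)^3 ≤ (exp 1)^3 :=
          pow_le_pow_left₀ (by norm_num) Real.exp_one_gt_d9.le 3
        nlinarith
    _ ≤ exp π := exp_le_exp.2 Real.pi_gt_three.le


lemma gauss_le_uMaj {a : ℝ} (ha : π ≤ a) (n : ℤ) :
    Real.exp (-a * (n:ℝ)^2) ≤ uMaj n := by
  have h1 : Real.exp (-a * (n:ℝ)^2) ≤ Real.exp (-π * (n:ℝ)^2) := by
    apply exp_le_exp.2
    nlinarith [sq_nonneg (n:ℝ)]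
  refine h1.trans ?_
  have hcast : ((n:ℝ))^2 = ((n.natAbs^2 : ℕ) : ℝ) := by
    push_cast [Nat.cast_natAbs]
    rw [sq_abs]
  rw [hcast, show -π * ((n.natAbs^2 : ℕ) : ℝ) = ((n.natAbs^2 : ℕ) : ℝ) * (-π) by ring,
    Real.exp_nat_mul]
  calc Real.exp (-π) ^ (n.natAbs ^ 2) ≤ Real.exp (-π) ^ (n.natAbs) := by
        apply pow_le_pow_of_le_one (exp_nonneg _) (exp_neg_pi_le.trans (by norm_num))
        nlinarith [Nat.zero_le n.natAbs, sq_nonneg (n.natAbs - 1)]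
    _ ≤ (1/20 : ℝ) ^ n.natAbs := pow_le_pow_left₀ (exp_nonneg _) exp_neg_pi_le _
    _ = uMaj n := rfl

lemma summable_gauss {a : ℝ} (ha : π ≤ a) :
    Summable (fun n : ℤ => Real.exp (-a * (n:ℝ)^2)) :=
  Summable.of_nonneg_of_le (fun _ => exp_nonneg _) (gauss_le_uMaj ha) hasSum_uMaj.summable

lemma tsum_gauss_pi_le : ∑' n : ℤ, Real.exp (-π * (n:ℝ)^2) ≤ 2 := by
  calc ∑' n : ℤ, Real.exp (-π * (n:ℝ)^2) ≤ ∑' n, uMaj n :=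
        Summable.tsum_le_tsum (gauss_le_uMaj le_rfl) (summable_gauss le_rfl) hasSum_uMaj.summable
    _ = 21/19 := hasSum_uMaj.tsum_eq
    _ ≤ 2 := by norm_num

open Real

/-- Splitting equiv for tuples. -/
def tupEquiv (n : ℕ) : (Fin (n+1) → ℤ) ≃ ℤ × (Fin n → ℤ) where
  toFun x := (x 0, fun j => x j.succ)
  invFun p := Fin.cons p.1 p.2
  left_inv x := by
    funext j
    refine Fin.cases ?_ (fun i => ?_) j <;> simp
  right_inv p := by
    ext <;> simp

set_option maxHeartbeats 1000000 in
lemma pi_prod {f : ℤ → ℝ} (hf : Summable f) (h0 : ∀ n, 0 ≤ f n) :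
    ∀ n : ℕ, Summable (fun x : Fin n → ℤ => ∏ j, f (x j)) ∧
      (∑' x : Fin n → ℤ, ∏ j, f (x j)) = (∑' k, f k) ^ n := by
  intro n
  induction n with
  | zero =>
    have h : HasSum (fun x : Fin 0 → ℤ => ∏ j, f (x j))
        (∏ j : Fin 0, f ((default : Fin 0 → ℤ) j)) :=
      hasSum_single (default : Fin 0 → ℤ)
        (fun b hb => absurd (Subsingleton.elim b default) hb)
    have h1 : (∏ j : Fin 0, f ((default : Fin 0 → ℤ) j)) = 1 := by simp
    rw [h1] at h
    exact ⟨h.summable, by rw [h.tsum_eq, pow_zero]⟩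
  | succ n ih =>
    set e := tupEquiv n
    have hF1 : Summable (fun p : ℤ × (Fin n → ℤ) => f p.1 * ∏ j, f (p.2 j)) :=
      Summable.mul_of_nonneg (f := f) (g := fun x : Fin n → ℤ => ∏ j, f (x j))
        hf ih.1 h0 (fun x => Finset.prod_nonneg fun j _ => h0 _)
    have key : (fun x : Fin (n+1) → ℤ => ∏ j, f (x j))
        = (fun p : ℤ × (Fin n → ℤ) => f p.1 * ∏ j, f (p.2 j)) ∘ e := by
      funext x
      simp only [Function.comp_apply]
      rw [Fin.prod_univ_succ]
      rfl
    constructor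
    · rw [key]
      exact (Equiv.summable_iff e).mpr hF1
    · rw [key]
      have ht : ∑' x : Fin (n+1) → ℤ,
          ((fun p : ℤ × (Fin n → ℤ) => f p.1 * ∏ j, f (p.2 j)) ∘ e) x
          = ∑' p : ℤ × (Fin n → ℤ), f p.1 * ∏ j, f (p.2 j) :=
        e.tsum_eq (fun p : ℤ × (Fin n → ℤ) => f p.1 * ∏ j, f (p.2 j))
      rw [ht]
      have hnorm1 : Summable (fun k => ‖f k‖) := by
        have : (fun k => ‖f k‖) = f := funext fun k => Real.norm_of_nonneg (h0 k)
        rw [this]; exact hf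
      have hnorm2 : Summable (fun x : Fin n → ℤ => ‖∏ j, f (x j)‖) := by
        have : (fun x : Fin n → ℤ => ‖∏ j, f (x j)‖) = fun x => ∏ j, f (x j) :=
          funext fun x => Real.norm_of_nonneg (Finset.prod_nonneg fun j _ => h0 _)
        rw [this]; exact ih.1
      rw [← tsum_mul_tsum_of_summable_norm hnorm1 hnorm2, ih.2, pow_succ]
      ring



/-- The rows of the generator matrix of the ℤ/4ℤ-linear code `C₄`. -/
def genC4 : Fin 3 → (Fin 6 → ZMod 4) :=
  ![![1, 0, 0, 0, 1, 1], ![0, 1, 0, 1, 0, 2], ![0, 0, 1, 1, 2, 0]]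

/-- The code `C₄ ⊆ (ℤ/4ℤ)⁶` generated by the rows of `genC4`. -/
def codeC4 : Submodule (ZMod 4) (Fin 6 → ZMod 4) :=
  Submodule.span (ZMod 4) (Set.range genC4)

/-- The Construction A lattice `Λ = (1/2)·{x ∈ ℤ⁶ : x mod 4 ∈ C₄}`. -/
def latticeC4 : Set (Fin 6 → ℝ) :=
  { v | ∃ x : Fin 6 → ℤ, (fun i => (x i : ZMod 4)) ∈ codeC4 ∧
    v = fun i => (x i : ℝ) / 2 }

set_option maxHeartbeats 1000000 in
/-- there exists `τ > 0` with `Θ_Λ(iτ) > Θ_{ℤ⁶}(iτ)` for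
`Λ = A₄(C₄)`, i.e. the theta series ratio `Δ_Λ(τ)` exceeds `1` for some `τ > 0`. -/
theorem latticeC4_theta_ratio_exceeds_one :
    ∃ τ : ℝ, 0 < τ ∧
      (∑' v : latticeC4, Real.exp (-Real.pi * τ * ∑ j, ((v : Fin 6 → ℝ) j) ^ 2))
        > (∑' x : Fin 6 → ℤ, Real.exp (-Real.pi * τ * ∑ j, ((x j : ℝ)) ^ 2)) := by
  classical
  refine ⟨16, by norm_num, ?_⟩
  have hπ : 0 < π := Real.pi_pos
  have h16 : π ≤ π * 16 := by nlinarith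
  have h4 : π ≤ π * 4 := by nlinarith
  have hS16 := pi_prod (summable_gauss h16) (fun n => Real.exp_nonneg _) 6
  have hS4 := pi_prod (summable_gauss h4) (fun n => Real.exp_nonneg _) 6
  have hSπ := pi_prod (summable_gauss (le_refl π)) (fun n => Real.exp_nonneg _) 6
  -- the three relevant functions on ℤ⁶
  set F : (Fin 6 → ℤ) → ℝ := fun x => Real.exp (-π * 16 * ∑ j, ((x j : ℝ)) ^ 2) with hF
  set P : (Fin 6 → ℤ) → ℝ := fun x => Real.exp (-π * ∑ j, ((x j : ℝ)) ^ 2) with hP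
  set H : (Fin 6 → ℤ) → ℝ := fun x => Real.exp (-π * 16 * ∑ j, ((x j : ℝ) / 2) ^ 2) with hH
  have hFprod : F = fun x => ∏ j, Real.exp (-(π * 16) * ((x j : ℝ)) ^ 2) := by
    funext x
    simp only [hF]
    rw [show -π * 16 * ∑ j, ((x j : ℝ)) ^ 2 = ∑ j, (-(π * 16) * ((x j : ℝ)) ^ 2) by
      rw [Finset.mul_sum]; exact Finset.sum_congr rfl fun j _ => by ring, Real.exp_sum]
  have hPprod : P = fun x => ∏ j, Real.exp (-π * ((x j : ℝ)) ^ 2) := by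
    funext x
    simp only [hP]
    rw [show -π * ∑ j, ((x j : ℝ)) ^ 2 = ∑ j, (-π * ((x j : ℝ)) ^ 2) by
      rw [Finset.mul_sum], Real.exp_sum]
  have hHprod : H = fun x => ∏ j, Real.exp (-(π * 4) * ((x j : ℝ)) ^ 2) := by
    funext x
    simp only [hH]
    rw [show -π * 16 * ∑ j, ((x j : ℝ) / 2) ^ 2 = ∑ j, (-(π * 4) * ((x j : ℝ)) ^ 2) by
      rw [Finset.mul_sum]; exact Finset.sum_congr rfl fun j _ => by ring, Real.exp_sum]
  have hFsummable : Summable F := by rw [hFprod]; exact hS16.1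
  have hPsummable : Summable P := by rw [hPprod]; exact hSπ.1
  have hHsummable : Summable H := by rw [hHprod]; exact hS4.1
  have hPle : (∑' x, P x) ≤ 64 := by
    rw [hPprod, hSπ.2]
    calc (∑' n : ℤ, Real.exp (-π * (n : ℝ) ^ 2)) ^ 6 ≤ 2 ^ 6 :=
          pow_le_pow_left₀ (tsum_nonneg fun n => Real.exp_nonneg _) tsum_gauss_pi_le 6
      _ = 64 := by norm_num
  -- pointwise bound for nonzero x
  have hq1 : ∀ x : Fin 6 → ℤ, x ≠ 0 → (1 : ℝ) ≤ ∑ j, ((x j : ℝ)) ^ 2 := by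
    intro x hx
    obtain ⟨j, hj⟩ := Function.ne_iff.mp hx
    have hj' : x j ≠ 0 := by simpa using hj
    have h2 : (1 : ℤ) ≤ (x j) ^ 2 := by
      nlinarith [Int.one_le_abs hj', abs_nonneg (x j), sq_abs (x j)]
    have h1 : (1 : ℝ) ≤ ((x j : ℝ)) ^ 2 := by exact_mod_cast h2
    exact h1.trans (Finset.single_le_sum (fun i _ => sq_nonneg ((x i : ℝ)))
      (Finset.mem_univ j))
  have hpoint : ∀ x : Fin 6 → ℤ, x ≠ 0 → F x ≤ Real.exp (-(14 * π)) * P x := by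
    intro x hx
    rw [hF, hP, ← Real.exp_add]
    apply Real.exp_le_exp.2
    have hq := hq1 x hx
    nlinarith
  -- upper bound on the ℤ⁶ theta sum
  have hsum_ite : Summable (fun x : Fin 6 → ℤ => if x = 0 then 0 else F x) := by
    refine Summable.of_nonneg_of_le (fun x => ?_) (fun x => ?_) hFsummable
    · split <;> [rfl; exact Real.exp_nonneg _]
    · split
      · exact Real.exp_nonneg _
      · exact le_rfl
  have hRbound : (∑' x : Fin 6 → ℤ, F x) ≤ 1 + Real.exp (-(14 * π)) * 64 := by
    rw [Summable.tsum_eq_add_tsum_ite hFsummable 0]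
    have hF0 : F 0 = 1 := by simp [hF]
    rw [hF0]
    have hite : (∑' x : Fin 6 → ℤ, if x = 0 then 0 else F x)
        ≤ Real.exp (-(14 * π)) * ∑' x, P x := by
      rw [← tsum_mul_left]
      refine Summable.tsum_le_tsum (fun x => ?_) hsum_ite (hPsummable.mul_left _)
      by_cases hx : x = 0
      · simp only [hx, if_pos rfl]
        positivity
      · rw [if_neg hx]
        exact hpoint x hx
    have h2 : Real.exp (-(14 * π)) * (∑' x, P x) ≤ Real.exp (-(14 * π)) * 64 :=
      mul_le_mul_of_nonneg_left hPle (Real.exp_nonneg _)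
    linarith
  -- the lattice sum
  set L : latticeC4 → ℝ :=
    fun v => Real.exp (-π * 16 * ∑ j, ((v : Fin 6 → ℝ) j) ^ 2) with hL
  set ι : latticeC4 → (Fin 6 → ℤ) :=
    fun v => fun i => ⌊(2 : ℝ) * (v : Fin 6 → ℝ) i⌋ with hι
  have hspec : ∀ (v : latticeC4) (i : Fin 6),
      ((ι v i : ℤ) : ℝ) = 2 * (v : Fin 6 → ℝ) i := by
    rintro ⟨v, x, hx, rfl⟩ i
    show ((⌊(2 : ℝ) * ((x i : ℝ) / 2)⌋ : ℤ) : ℝ) = 2 * ((x i : ℝ) / 2)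
    rw [show (2 : ℝ) * ((x i : ℝ) / 2) = (x i : ℝ) by ring, Int.floor_intCast]
  have hinj : Function.Injective ι := by
    intro v w h
    apply Subtype.ext; funext i
    have hv := hspec v i
    rw [h, hspec w i] at hv
    linarith
  have hLeq : L = H ∘ ι := by
    funext v
    simp only [Function.comp_apply, hL, hH, hι]
    congr 1
    congr 1
    refine Finset.sum_congr rfl fun j _ => ?_
    rw [hspec v j]
    ring
  have hLsummable : Summable L := by
    rw [hLeq]; exact hHsummable.comp_injective hinj
  -- the two lattice points
  have hz : (0 : Fin 6 → ℝ) ∈ latticeC4 := by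
    refine ⟨0, ?_, ?_⟩
    · have h0 : (fun i : Fin 6 => (((0 : Fin 6 → ℤ)) i : ZMod 4)) = 0 := by
        funext i; simp
      rw [h0]; exact codeC4.zero_mem
    · funext i; simp
  have hwmem : (fun i => ((![1,0,0,0,1,1] : Fin 6 → ℤ) i : ℝ) / 2) ∈ latticeC4 := by
    refine ⟨![1,0,0,0,1,1], ?_, rfl⟩
    have hc : (fun i => (((![1,0,0,0,1,1] : Fin 6 → ℤ)) i : ZMod 4)) = genC4 0 := by
      decide
    rw [hc]
    exact Submodule.subset_span ⟨0, rfl⟩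
  set z : latticeC4 := ⟨0, hz⟩ with hzdef
  set w : latticeC4 := ⟨_, hwmem⟩ with hwdef
  have hzw : z ≠ w := by
    intro h
    have h0 := congrFun (congrArg Subtype.val h) 0
    simp [hzdef, hwdef] at h0
  have hLz : L z = 1 := by simp [hL, hzdef]
  have hLw : L w = Real.exp (-π * 16 * (3 / 4 : ℝ)) := by
    have hsum : ∑ j, ((w : Fin 6 → ℝ) j) ^ 2 = 3 / 4 := by
      rw [hwdef]
      show ∑ j, (((![1,0,0,0,1,1] : Fin 6 → ℤ) j : ℝ) / 2) ^ 2 = 3 / 4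
      rw [Fin.sum_univ_six]
      norm_num [show (![1,0,0,0,1,1] : Fin 6 → ℤ) 0 = 1 from rfl,
        show (![1,0,0,0,1,1] : Fin 6 → ℤ) 1 = 0 from rfl,
        show (![1,0,0,0,1,1] : Fin 6 → ℤ) 2 = 0 from rfl,
        show (![1,0,0,0,1,1] : Fin 6 → ℤ) 3 = 0 from rfl,
        show (![1,0,0,0,1,1] : Fin 6 → ℤ) 4 = 1 from rfl,
        show (![1,0,0,0,1,1] : Fin 6 → ℤ) 5 = 1 from rfl]
    rw [hL]
    simp only
    rw [hsum]
  have hlow : 1 + Real.exp (-π * 16 * (3 / 4 : ℝ)) ≤ ∑' v, L v := by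
    have h := Summable.sum_le_tsum ({z, w} : Finset latticeC4) (fun i _ => Real.exp_nonneg _)
      hLsummable
    rw [Finset.sum_pair hzw] at h
    calc 1 + Real.exp (-π * 16 * (3 / 4 : ℝ)) = L z + L w := by rw [hLz, hLw]
      _ ≤ ∑' v, L v := h
  -- numeric comparison
  have hcmp : 1 + Real.exp (-(14 * π)) * 64 < 1 + Real.exp (-π * 16 * (3 / 4 : ℝ)) := by
    have h12 : -π * 16 * (3 / 4 : ℝ) = 2 * π + -(14 * π) := by ring
    rw [h12, Real.exp_add]
    have h64 : (64 : ℝ) < Real.exp (2 * π) := by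
      have h6 : (6 : ℝ) ≤ 2 * π := by nlinarith [Real.pi_gt_three]
      have hexp6 : Real.exp 1 ^ (6 : ℕ) = Real.exp 6 := by
        rw [← Real.exp_nat_mul]; norm_num
      have h2 : (2 : ℝ) < Real.exp 1 := by nlinarith [Real.exp_one_gt_d9]
      calc (64 : ℝ) = 2 ^ (6 : ℕ) := by norm_num
        _ < Real.exp 1 ^ (6 : ℕ) := by
            exact pow_lt_pow_left₀ h2 (by norm_num) (by norm_num)
        _ = Real.exp 6 := hexp6
        _ ≤ Real.exp (2 * π) := Real.exp_le_exp.2 h6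
    nlinarith [Real.exp_pos (-(14 * π))]
  calc (∑' x : Fin 6 → ℤ, F x) ≤ 1 + Real.exp (-(14 * π)) * 64 := hRbound
    _ < 1 + Real.exp (-π * 16 * (3 / 4 : ℝ)) := hcmp
    _ ≤ ∑' v, L v := hlow
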